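/- arXiv:2602.13646 — 8 statements merged into one kernel-verified Lean document; each statement's English description precedes it below -/
import Mathlib

section
/- Let E be a real normed space, let β ∈ [0,1), and let m, g : ℕ → E satisfy m 0 = 0 and m (k+1) = β • (m k) + g k for all k. Then for every natural number K, ∑_{k=0}^{K} ‖m k‖² ≤ (2/(1−β)²) · ∑_{k=0}^{K} ‖g k‖². (Summed boundedness of the squared momentum norms, part (ii) of the paper's momentum-boundedness lemma.) -/
/-- Summed boundedness of the squared momentum norms: if `m 0 = 0` and
`m (k+1) = β • m k + g k` with `β ∈ [0,1)`, then
`∑_{k=0}^{K} ‖m k‖² ≤ (2/(1-β)²) ∑_{k=0}^{K} ‖g k‖²`. -/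
theorem momentum_summed_sq_bound {E : Type*} [NormedAddCommGroup E] [NormedSpace ℝ E]
    (β : ℝ) (hβ0 : 0 ≤ β) (hβ1 : β < 1)
    (m g : ℕ → E) (hm0 : m 0 = 0)
    (hrec : ∀ k, m (k + 1) = β • m k + g k) :
    ∀ K : ℕ, ∑ k ∈ Finset.range (K + 1), ‖m k‖ ^ 2 ≤
      (2 / (1 - β) ^ 2) * ∑ k ∈ Finset.range (K + 1), ‖g k‖ ^ 2 := by
  intro K
  have hb : (0:ℝ) < 1 - β := by linarith
  -- pointwise bound
  have key : ∀ k, ‖m (k + 1)‖ ^ 2 ≤ β * ‖m k‖ ^ 2 + (1 / (1 - β)) * ‖g k‖ ^ 2 := by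
    intro k
    have h1 : ‖m (k + 1)‖ ≤ β * ‖m k‖ + ‖g k‖ := by
      rw [hrec k]
      calc ‖β • m k + g k‖ ≤ ‖β • m k‖ + ‖g k‖ := norm_add_le _ _
        _ = β * ‖m k‖ + ‖g k‖ := by rw [norm_smul, Real.norm_of_nonneg hβ0]
    have ha : (0:ℝ) ≤ ‖m k‖ := norm_nonneg _
    have hb' : (0:ℝ) ≤ ‖g k‖ := norm_nonneg _
    have hnn : (0:ℝ) ≤ ‖m (k+1)‖ := norm_nonneg _
    have h2 : ‖m (k + 1)‖ ^ 2 ≤ (β * ‖m k‖ + ‖g k‖) ^ 2 := by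
      have : (0:ℝ) ≤ β * ‖m k‖ + ‖g k‖ := by positivity
      nlinarith
    have h3 : (β * ‖m k‖ + ‖g k‖) ^ 2 ≤ β * ‖m k‖ ^ 2 + (1 / (1 - β)) * ‖g k‖ ^ 2 := by
      have hsq : (0:ℝ) ≤ ((1 - β) * ‖m k‖ - ‖g k‖) ^ 2 := sq_nonneg _
      have h4 : β * ((1 - β) * ‖m k‖ - ‖g k‖) ^ 2 / (1 - β) ≥ 0 := by positivity
      have : (β * ‖m k‖ + ‖g k‖) ^ 2 + β * ((1 - β) * ‖m k‖ - ‖g k‖) ^ 2 / (1 - β)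
          = β * ‖m k‖ ^ 2 + (1 / (1 - β)) * ‖g k‖ ^ 2 := by
        field_simp
        ring
      linarith
    linarith
  set S := ∑ k ∈ Finset.range (K + 1), ‖m k‖ ^ 2 with hS
  set G := ∑ k ∈ Finset.range (K + 1), ‖g k‖ ^ 2 with hG
  have hGnn : 0 ≤ G := Finset.sum_nonneg fun _ _ => sq_nonneg _
  have hSnn : 0 ≤ S := Finset.sum_nonneg fun _ _ => sq_nonneg _
  have hshift : S = ∑ k ∈ Finset.range K, ‖m (k + 1)‖ ^ 2 := by
    rw [hS, Finset.sum_range_succ']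
    simp [hm0]
  have hstep : S ≤ β * S + (1 / (1 - β)) * G := by
    calc S = ∑ k ∈ Finset.range K, ‖m (k + 1)‖ ^ 2 := hshift
      _ ≤ ∑ k ∈ Finset.range K, (β * ‖m k‖ ^ 2 + (1 / (1 - β)) * ‖g k‖ ^ 2) :=
          Finset.sum_le_sum fun k _ => key k
      _ = β * (∑ k ∈ Finset.range K, ‖m k‖ ^ 2)
          + (1 / (1 - β)) * ∑ k ∈ Finset.range K, ‖g k‖ ^ 2 := by
          rw [Finset.sum_add_distrib, Finset.mul_sum, Finset.mul_sum]
      _ ≤ β * S + (1 / (1 - β)) * G := by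
          gcongr <;>
          · exact Finset.sum_le_sum_of_subset_of_nonneg
              (Finset.range_subset_range.2 (Nat.le_succ K)) (fun _ _ _ => sq_nonneg _)
  have h5 : (1 - β) * S ≤ (1 / (1 - β)) * G := by linarith
  have h6 : S ≤ G / (1 - β) ^ 2 := by
    rw [le_div_iff₀ (pow_pos hb 2)]
    have hinv : (1 - β) * (1 / (1 - β)) = 1 := by field_simp
    nlinarith [mul_le_mul_of_nonneg_left h5 hb.le]
  have : G / (1 - β) ^ 2 ≤ 2 / (1 - β) ^ 2 * G := by
    rw [div_eq_mul_inv, div_eq_mul_inv]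
    nlinarith [sq_nonneg (1-β), inv_nonneg.2 (le_of_lt (pow_pos hb 2)), pow_pos hb 2]
  linarith
end

section
/- Let E and F be real normed spaces, let β ∈ [0,1) and L ≥ 0, let m, g : ℕ → E satisfy m 0 = 0 and m (k+1) = β • (m k) + g k for all k, and let x : ℕ → F be a sequence such that ‖g k − g (k−1)‖ ≤ L · ‖x k − x (k−1)‖ for all k ≥ 1. Then for every natural number K, ∑_{k=0}^{K} ‖m (k+1) − m k‖² ≤ (2L²/(1−β)²) · ∑_{k=0}^{K} ‖x (k+1) − x k‖² + (2/(1−β²)) · ‖g 0‖². (Summed boundedness of the squared momentum increments, part (iii) of the paper's momentum-boundedness lemma; note m 1 − m 0 = g 0.) -/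
/-- Summed boundedness of the squared momentum increments: if `m 0 = 0`,
`m (k+1) = β • m k + g k` with `β ∈ [0,1)`, and
`‖g k - g (k-1)‖ ≤ L * ‖x k - x (k-1)‖` for all `k ≥ 1`, then
`∑_{k=0}^{K} ‖m (k+1) - m k‖² ≤ (2L²/(1-β)²) ∑_{k=0}^{K} ‖x (k+1) - x k‖² + (2/(1-β²)) ‖g 0‖²`. -/
theorem momentum_increment_summed_sq_bound {E F : Type*}
    [NormedAddCommGroup E] [NormedSpace ℝ E]
    [NormedAddCommGroup F] [NormedSpace ℝ F]
    (β L : ℝ) (hβ0 : 0 ≤ β) (hβ1 : β < 1) (hL : 0 ≤ L)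
    (m g : ℕ → E) (x : ℕ → F)
    (hm0 : m 0 = 0)
    (hrec : ∀ k, m (k + 1) = β • m k + g k)
    (hlip : ∀ k, 1 ≤ k → ‖g k - g (k - 1)‖ ≤ L * ‖x k - x (k - 1)‖) :
    ∀ K : ℕ, ∑ k ∈ Finset.range (K + 1), ‖m (k + 1) - m k‖ ^ 2 ≤
      (2 * L ^ 2 / (1 - β) ^ 2) * ∑ k ∈ Finset.range (K + 1), ‖x (k + 1) - x k‖ ^ 2
        + (2 / (1 - β ^ 2)) * ‖g 0‖ ^ 2 := by
  intro K
  have hb : (0:ℝ) < 1 - β := by linarith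
  set s : ℕ → ℝ := fun k => ‖m (k + 1) - m k‖ ^ 2 with hs
  set c : ℕ → ℝ := fun k => ‖x (k + 1) - x k‖ ^ 2 with hc
  have hδ0 : m 1 - m 0 = g 0 := by rw [hrec 0, hm0]; simp
  have hs0 : s 0 = ‖g 0‖ ^ 2 := by simp [hs, hδ0]
  have hsnn : ∀ k, 0 ≤ s k := fun k => sq_nonneg _
  have hcnn : ∀ k, 0 ≤ c k := fun k => sq_nonneg _
  -- per-step inequality
  have hstep : ∀ k, (1 - β) * s (k + 1) ≤ (1 - β) * β * s k + L ^ 2 * c k := by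
    intro k
    have h1 : m (k + 2) - m (k + 1) = β • (m (k + 1) - m k) + (g (k + 1) - g k) := by
      rw [hrec (k + 1), hrec k]; module
    have hl := hlip (k + 1) (by omega)
    simp only [Nat.add_sub_cancel] at hl
    have h2 : ‖m (k + 2) - m (k + 1)‖ ≤ β * ‖m (k + 1) - m k‖ + L * ‖x (k + 1) - x k‖ := by
      rw [h1]
      calc ‖β • (m (k + 1) - m k) + (g (k + 1) - g k)‖
          ≤ ‖β • (m (k + 1) - m k)‖ + ‖g (k + 1) - g k‖ := norm_add_le _ _
        _ ≤ β * ‖m (k + 1) - m k‖ + L * ‖x (k + 1) - x k‖ := by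
            rw [norm_smul, Real.norm_eq_abs, abs_of_nonneg hβ0]
            exact add_le_add (le_refl _) hl
    have hu := norm_nonneg (m (k + 1) - m k)
    have hv := norm_nonneg (x (k + 1) - x k)
    have hw := norm_nonneg (m (k + 2) - m (k + 1))
    simp only [hs, hc]
    nlinarith [mul_nonneg hβ0 (sq_nonneg ((1 - β) * ‖m (k + 1) - m k‖ - L * ‖x (k + 1) - x k‖)),
      sq_nonneg (β * ‖m (k + 1) - m k‖ + L * ‖x (k + 1) - x k‖),
      mul_nonneg hL hv, mul_nonneg hβ0 hu,
      mul_le_mul_of_nonneg_left h2 hb.le,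
      mul_le_mul h2 h2 hw (by positivity : (0:ℝ) ≤ β * ‖m (k + 1) - m k‖ + L * ‖x (k + 1) - x k‖)]
  -- summed recursion, by induction
  have claim : ∀ N : ℕ, (1 - β) * ∑ k ∈ Finset.range (N + 1), s k ≤
      (1 - β) * ‖g 0‖ ^ 2 + (1 - β) * β * ∑ k ∈ Finset.range N, s k
        + L ^ 2 * ∑ k ∈ Finset.range N, c k := by
    intro N
    induction N with
    | zero => simp [hs0]
    | succ n ih =>
      rw [Finset.sum_range_succ (f := s), Finset.sum_range_succ (f := s),
        Finset.sum_range_succ (f := c)]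
      rw [Finset.sum_range_succ (f := s)] at ih
      have := hstep n
      nlinarith
  -- put it together
  have hT := claim K
  have hmono : ∑ k ∈ Finset.range K, s k ≤ ∑ k ∈ Finset.range (K + 1), s k :=
    Finset.sum_le_sum_of_subset_of_nonneg (Finset.range_subset_range.mpr (by omega))
      (fun i _ _ => hsnn i)
  have hcmono : ∑ k ∈ Finset.range K, c k ≤ ∑ k ∈ Finset.range (K + 1), c k :=
    Finset.sum_le_sum_of_subset_of_nonneg (Finset.range_subset_range.mpr (by omega))
      (fun i _ _ => hcnn i)
  set T := ∑ k ∈ Finset.range (K + 1), s k with hTdef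
  set X := ∑ k ∈ Finset.range (K + 1), c k with hXdef
  have hXnn : 0 ≤ X := Finset.sum_nonneg fun i _ => hcnn i
  have hGnn : (0:ℝ) ≤ ‖g 0‖ ^ 2 := sq_nonneg _
  have key : (1 - β) ^ 2 * T ≤ (1 - β) * ‖g 0‖ ^ 2 + L ^ 2 * X := by
    nlinarith [mul_le_mul_of_nonneg_left hmono (mul_nonneg hb.le hβ0),
      mul_le_mul_of_nonneg_left hcmono (sq_nonneg L)]
  have hb2 : (0:ℝ) < 1 - β ^ 2 := by nlinarith
  have hTle : T ≤ ((1 - β) * ‖g 0‖ ^ 2 + L ^ 2 * X) / (1 - β) ^ 2 :=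
    (le_div_iff₀ (by positivity)).mpr (by linarith [key])
  have heq : ((1 - β) * ‖g 0‖ ^ 2 + L ^ 2 * X) / (1 - β) ^ 2
      = (1 / (1 - β)) * ‖g 0‖ ^ 2 + (L ^ 2 / (1 - β) ^ 2) * X := by
    field_simp
  have c1 : 1 / (1 - β) ≤ 2 / (1 - β ^ 2) := by
    rw [div_le_div_iff₀ hb hb2]; nlinarith
  have c2 : L ^ 2 / (1 - β) ^ 2 ≤ 2 * L ^ 2 / (1 - β) ^ 2 := by
    gcongr
    nlinarith [sq_nonneg L]
  calc T ≤ (1 / (1 - β)) * ‖g 0‖ ^ 2 + (L ^ 2 / (1 - β) ^ 2) * X := heq ▸ hTle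
    _ ≤ (2 * L ^ 2 / (1 - β) ^ 2) * X + (2 / (1 - β ^ 2)) * ‖g 0‖ ^ 2 := by
        have := mul_le_mul_of_nonneg_right c1 hGnn
        have := mul_le_mul_of_nonneg_right c2 hXnn
        linarith
end

section
/- Let β ∈ [0,1) and let a, b : ℕ → ℝ be sequences of nonnegative reals satisfying a (k+1) ≤ β · (a k) + b k for all k. Then for every natural number K, ∑_{k=0}^{K} (a k)² ≤ (2/(1−β)²) · ∑_{k=0}^{K} (b k)² + (2/(1−β²)) · (a 0)². (The key geometric-recursion summation lemma used three times in the paper's convergence analysis.) -/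
/-- The key geometric-recursion summation lemma: if `a (k+1) ≤ β * a k + b k` with
`β ∈ [0,1)` and `a, b` nonnegative, then
`∑_{k=0}^{K} (a k)² ≤ (2/(1-β)²) ∑_{k=0}^{K} (b k)² + (2/(1-β²)) (a 0)²`. -/
theorem geometric_recursion_summed_sq_bound
    (β : ℝ) (hβ0 : 0 ≤ β) (hβ1 : β < 1)
    (a b : ℕ → ℝ) (ha : ∀ k, 0 ≤ a k) (hb : ∀ k, 0 ≤ b k)
    (hrec : ∀ k, a (k + 1) ≤ β * a k + b k) :
    ∀ K : ℕ, ∑ k ∈ Finset.range (K + 1), (a k) ^ 2 ≤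
      (2 / (1 - β) ^ 2) * ∑ k ∈ Finset.range (K + 1), (b k) ^ 2
        + (2 / (1 - β ^ 2)) * (a 0) ^ 2 := by
  intro K
  have hβ2 : 0 < 1 - β ^ 2 := by nlinarith
  set γ : ℝ := (1 + β ^ 2) / 2 with hγ
  set C : ℝ := (1 + β ^ 2) / (1 - β ^ 2) with hC
  have key : ∀ k, a (k + 1) ^ 2 ≤ γ * a k ^ 2 + C * b k ^ 2 := by
    intro k
    have h1 : a (k + 1) ^ 2 ≤ (β * a k + b k) ^ 2 := by
      have := hrec k
      nlinarith [ha (k + 1), ha k, hb k]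
    have h2 : (β * a k + b k) ^ 2 ≤ γ * a k ^ 2 + C * b k ^ 2 := by
      rw [← sub_nonneg]
      have heq : γ * a k ^ 2 + C * b k ^ 2 - (β * a k + b k) ^ 2 =
          ((1 - β ^ 2) * a k - 2 * β * b k) ^ 2 / (2 * (1 - β ^ 2)) := by
        rw [hγ, hC]; field_simp; ring
      rw [heq]; positivity
    linarith
  set S : ℝ := ∑ k ∈ Finset.range (K + 1), a k ^ 2 with hS
  set T : ℝ := ∑ k ∈ Finset.range (K + 1), b k ^ 2 with hT
  have hTnn : 0 ≤ T := Finset.sum_nonneg fun k _ => sq_nonneg _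
  have hsum : S ≤ a 0 ^ 2 + γ * S + C * T := by
    have h1 : S = a 0 ^ 2 + ∑ k ∈ Finset.range K, a (k + 1) ^ 2 := by
      rw [hS, Finset.sum_range_succ']
      ring
    have h2 : ∑ k ∈ Finset.range K, a (k + 1) ^ 2 ≤
        ∑ k ∈ Finset.range K, (γ * a k ^ 2 + C * b k ^ 2) :=
      Finset.sum_le_sum fun k _ => key k
    have h3 : ∑ k ∈ Finset.range K, (γ * a k ^ 2 + C * b k ^ 2)
        = γ * ∑ k ∈ Finset.range K, a k ^ 2 + C * ∑ k ∈ Finset.range K, b k ^ 2 := by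
      rw [Finset.sum_add_distrib, Finset.mul_sum, Finset.mul_sum]
    have hγnn : 0 ≤ γ := by positivity
    have hCnn : 0 ≤ C := by positivity
    have h4 : ∑ k ∈ Finset.range K, a k ^ 2 ≤ S := by
      rw [hS, Finset.sum_range_succ]; nlinarith [sq_nonneg (a K)]
    have h5 : ∑ k ∈ Finset.range K, b k ^ 2 ≤ T := by
      rw [hT, Finset.sum_range_succ]; nlinarith [sq_nonneg (b K)]
    nlinarith [mul_le_mul_of_nonneg_left h4 hγnn, mul_le_mul_of_nonneg_left h5 hCnn]
  -- (1 - γ) S ≤ a0² + C T, with 1 - γ = (1-β²)/2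
  have hbound : S ≤ (2 / (1 - β ^ 2)) * a 0 ^ 2 + (2 * C / (1 - β ^ 2)) * T := by
    have h1 : (1 - γ) * S ≤ a 0 ^ 2 + C * T := by nlinarith
    have h2 : 1 - γ = (1 - β ^ 2) / 2 := by rw [hγ]; ring
    rw [h2] at h1
    rw [div_mul_eq_mul_div, div_mul_eq_mul_div, ← add_div, le_div_iff₀ hβ2]
    nlinarith
  have hcoef : 2 * C / (1 - β ^ 2) ≤ 2 / (1 - β) ^ 2 := by
    have hβ1' : 0 < 1 - β := by linarith
    rw [← sub_nonneg]
    have heq : 2 / (1 - β) ^ 2 - 2 * C / (1 - β ^ 2) =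
        (4 * β) / ((1 - β) ^ 2 * (1 + β) ^ 2) := by
      rw [hC]; field_simp; ring
    rw [heq]; positivity
  nlinarith [mul_le_mul_of_nonneg_right hcoef hTnn]
end

section
/- Let n ≥ 1, let E be a real inner product space, let M ⊆ E be nonempty, and let P : E → E be a nearest-point projection onto M which moreover satisfies ‖P z − P w‖ ≤ R · ‖z − w‖ for all z, w ∈ E, with R > 0. Let A be an n×n doubly stochastic matrix that is σ-contractive on mean-zero families, with σ ≥ 0. Let α ≥ 0, let x, v : Fin n → E, set x⁺ i := P((A·x) i − α • (v i)), and set x̄ := P((1/n) ∑_i x i) and x̄⁺ := P((1/n) ∑_i x⁺ i). Then √(∑_i ‖x⁺ i − x̄⁺‖²) ≤ σ R · √(∑_i ‖x i − x̄‖²) + α R · √(∑_i ‖v i‖²). (The paper's consensus-error one-step contraction lemma, Lemma 3.) -/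
open Finset

section Aux
variable {E : Type*} [NormedAddCommGroup E] [InnerProductSpace ℝ E]

/-- Bias–variance split. -/
lemma aux_sum_sq_split (n : ℕ) (y : Fin n → E) (m d : E)
    (hm : (∑ i, y i) = (n : ℝ) • m) :
    ∑ i, ‖y i - d‖ ^ 2 = (∑ i, ‖y i - m‖ ^ 2) + (n : ℝ) * ‖m - d‖ ^ 2 := by
  have key : ∀ i, ‖y i - d‖ ^ 2
      = ‖y i - m‖ ^ 2 + 2 * (inner ℝ (y i - m) (m - d) : ℝ) + ‖m - d‖ ^ 2 := by
    intro i
    have h : y i - d = (y i - m) + (m - d) := by abel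
    rw [h, @norm_add_sq_real]
  simp_rw [key]
  rw [Finset.sum_add_distrib, Finset.sum_add_distrib, ← Finset.mul_sum, ← sum_inner]
  have hz : (∑ i, (y i - m)) = 0 := by
    rw [Finset.sum_sub_distrib, hm, Finset.sum_const, card_univ, Fintype.card_fin,
      ← Nat.cast_smul_eq_nsmul ℝ, sub_self]
  rw [hz, inner_zero_left, mul_zero, add_zero, Finset.sum_const, card_univ, Fintype.card_fin,
    nsmul_eq_mul]

set_option linter.unusedSectionVars false in
/-- Minkowski for blocks. -/
lemma aux_ell2_add_le (n : ℕ) (a b : Fin n → E) :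
    Real.sqrt (∑ i, ‖a i + b i‖ ^ 2)
      ≤ Real.sqrt (∑ i, ‖a i‖ ^ 2) + Real.sqrt (∑ i, ‖b i‖ ^ 2) := by
  have key : ∀ (h : Fin n → ℝ),
      Real.sqrt (∑ i, (h i) ^ 2) = ‖(WithLp.equiv 2 (Fin n → ℝ)).symm h‖ := by
    intro h
    rw [EuclideanSpace.norm_eq]
    simp [Real.norm_eq_abs, sq_abs]
  have h1 : Real.sqrt (∑ i, ‖a i + b i‖ ^ 2)
      ≤ Real.sqrt (∑ i, (‖a i‖ + ‖b i‖) ^ 2) := by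
    apply Real.sqrt_le_sqrt
    apply Finset.sum_le_sum
    intro i _
    exact pow_le_pow_left₀ (norm_nonneg _) (norm_add_le _ _) 2
  refine h1.trans ?_
  rw [key (fun i => ‖a i‖ + ‖b i‖), key (fun i => ‖a i‖), key (fun i => ‖b i‖)]
  exact norm_add_le ((WithLp.equiv 2 (Fin n → ℝ)).symm (fun i => ‖a i‖))
    ((WithLp.equiv 2 (Fin n → ℝ)).symm (fun i => ‖b i‖))

/-- Pulling out a scalar. -/
lemma aux_ell2_smul (n : ℕ) (c : ℝ) (hc : 0 ≤ c) (a : Fin n → E) :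
    Real.sqrt (∑ i, ‖c • a i‖ ^ 2) = c * Real.sqrt (∑ i, ‖a i‖ ^ 2) := by
  simp_rw [norm_smul, Real.norm_eq_abs, abs_of_nonneg hc, mul_pow, ← Finset.mul_sum]
  rw [Real.sqrt_mul (by positivity), Real.sqrt_sq hc]
end Aux


/-- One-step contraction of the consensus error (the paper's Lemma 3):
with a nearest-point projection `P` onto `M` that is `R`-Lipschitz, a doubly
stochastic matrix `A` that is `σ`-contractive on mean-zero families, and the
update `x⁺ i = P((A·x) i - α • v i)`, one has
`‖x⁺ - x̄⁺‖₂ ≤ σ R ‖x - x̄‖₂ + α R ‖v‖₂`. -/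
theorem consensus_one_step_contraction
    {E : Type*} [NormedAddCommGroup E] [InnerProductSpace ℝ E]
    (n : ℕ) (hn : 1 ≤ n)
    (M : Set E) (hM : M.Nonempty)
    (P : E → E) (hPin : ∀ z, P z ∈ M)
    (hPnear : ∀ z : E, ∀ y ∈ M, ‖z - P z‖ ≤ ‖z - y‖)
    (R : ℝ) (hR : 0 < R)
    (hPlip : ∀ z w : E, ‖P z - P w‖ ≤ R * ‖z - w‖)
    (A : Fin n → Fin n → ℝ)
    (hA0 : ∀ i j, 0 ≤ A i j)
    (hArow : ∀ i, ∑ j, A i j = 1)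
    (hAcol : ∀ j, ∑ i, A i j = 1)
    (σ : ℝ) (hσ : 0 ≤ σ)
    (hcontr : ∀ v : Fin n → E, (∑ i, v i) = 0 →
      Real.sqrt (∑ i, ‖∑ j, A i j • v j‖ ^ 2) ≤ σ * Real.sqrt (∑ i, ‖v i‖ ^ 2))
    (α : ℝ) (hα : 0 ≤ α)
    (x v xplus : Fin n → E)
    (hxplus : ∀ i, xplus i = P ((∑ j, A i j • x j) - α • v i))
    (xbar xbarp : E)
    (hxbar : xbar = P ((n : ℝ)⁻¹ • ∑ i, x i))
    (hxbarp : xbarp = P ((n : ℝ)⁻¹ • ∑ i, xplus i)) :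
    Real.sqrt (∑ i, ‖xplus i - xbarp‖ ^ 2) ≤
      σ * R * Real.sqrt (∑ i, ‖x i - xbar‖ ^ 2)
        + α * R * Real.sqrt (∑ i, ‖v i‖ ^ 2) := by
  have hn0 : (0 : ℝ) < (n : ℝ) := by exact_mod_cast Nat.lt_of_lt_of_le Nat.zero_lt_one hn
  set m : E := (n : ℝ)⁻¹ • ∑ i, x i with hm
  set mp : E := (n : ℝ)⁻¹ • ∑ i, xplus i with hmp
  have hmsum : (∑ i, x i) = (n : ℝ) • m := by
    rw [hm, smul_smul, mul_inv_cancel₀ hn0.ne', one_smul]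
  have hmpsum : (∑ i, xplus i) = (n : ℝ) • mp := by
    rw [hmp, smul_smul, mul_inv_cancel₀ hn0.ne', one_smul]
  -- Step 1: replace xbarp with xbar
  have step1 : ∑ i, ‖xplus i - xbarp‖ ^ 2 ≤ ∑ i, ‖xplus i - xbar‖ ^ 2 := by
    rw [aux_sum_sq_split n xplus mp xbarp hmpsum, aux_sum_sq_split n xplus mp xbar hmpsum]
    have h1 : ‖mp - xbarp‖ ≤ ‖mp - xbar‖ := by
      rw [hxbarp]; exact hPnear mp xbar (hxbar ▸ hPin _)
    have := pow_le_pow_left₀ (norm_nonneg _) h1 2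
    nlinarith [this]
  -- mean-zero family
  set u : Fin n → E := fun j => x j - m with hu
  have husum : (∑ j, u j) = 0 := by
    simp only [hu, Finset.sum_sub_distrib, hmsum, Finset.sum_const, card_univ,
      Fintype.card_fin, ← Nat.cast_smul_eq_nsmul ℝ, sub_self]
  -- Step 2: pointwise Lipschitz bound
  have step2 : ∀ i, ‖xplus i - xbar‖ ≤ R * ‖(∑ j, A i j • u j) + (-α) • v i‖ := by
    intro i
    have hrow : (∑ j, A i j • x j) - α • v i - m = (∑ j, A i j • u j) + (-α) • v i := by
      have : (∑ j, A i j • u j) = (∑ j, A i j • x j) - m := by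
        simp only [hu, smul_sub, Finset.sum_sub_distrib, ← Finset.sum_smul, hArow i, one_smul]
      rw [this, neg_smul]; abel
    rw [hxplus i, hxbar, ← hrow]
    exact hPlip _ _
  -- assemble
  have sqrt1 : Real.sqrt (∑ i, ‖xplus i - xbarp‖ ^ 2)
      ≤ Real.sqrt (∑ i, ‖xplus i - xbar‖ ^ 2) := Real.sqrt_le_sqrt step1
  have sqrt2 : Real.sqrt (∑ i, ‖xplus i - xbar‖ ^ 2)
      ≤ Real.sqrt (∑ i, ‖R • ((∑ j, A i j • u j) + (-α) • v i)‖ ^ 2) := by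
    apply Real.sqrt_le_sqrt
    apply Finset.sum_le_sum
    intro i _
    apply pow_le_pow_left₀ (norm_nonneg _) _ 2
    rw [norm_smul, Real.norm_eq_abs, abs_of_nonneg hR.le]
    exact step2 i
  have sqrt3 : Real.sqrt (∑ i, ‖R • ((∑ j, A i j • u j) + (-α) • v i)‖ ^ 2)
      = R * Real.sqrt (∑ i, ‖(∑ j, A i j • u j) + (-α) • v i‖ ^ 2) :=
    aux_ell2_smul n R hR.le _
  have sqrt4 : Real.sqrt (∑ i, ‖(∑ j, A i j • u j) + (-α) • v i‖ ^ 2)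
      ≤ Real.sqrt (∑ i, ‖∑ j, A i j • u j‖ ^ 2)
        + Real.sqrt (∑ i, ‖(-α) • v i‖ ^ 2) :=
    aux_ell2_add_le n _ _
  have sqrt5 : Real.sqrt (∑ i, ‖(-α) • v i‖ ^ 2)
      = α * Real.sqrt (∑ i, ‖v i‖ ^ 2) := by
    simp_rw [neg_smul, norm_neg]
    exact aux_ell2_smul n α hα v
  have sqrt6 : Real.sqrt (∑ i, ‖∑ j, A i j • u j‖ ^ 2)
      ≤ σ * Real.sqrt (∑ i, ‖u i‖ ^ 2) := hcontr u husum
  have sqrt7 : Real.sqrt (∑ i, ‖u i‖ ^ 2) ≤ Real.sqrt (∑ i, ‖x i - xbar‖ ^ 2) := by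
    apply Real.sqrt_le_sqrt
    rw [aux_sum_sq_split n x m xbar hmsum]
    nlinarith [sq_nonneg ‖m - xbar‖, hn0]
  have hv0 : 0 ≤ Real.sqrt (∑ i, ‖v i‖ ^ 2) := Real.sqrt_nonneg _
  calc Real.sqrt (∑ i, ‖xplus i - xbarp‖ ^ 2)
      ≤ R * Real.sqrt (∑ i, ‖(∑ j, A i j • u j) + (-α) • v i‖ ^ 2) := by
        rw [← sqrt3]; exact sqrt1.trans sqrt2
    _ ≤ R * (σ * Real.sqrt (∑ i, ‖x i - xbar‖ ^ 2) + α * Real.sqrt (∑ i, ‖v i‖ ^ 2)) := by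
        apply mul_le_mul_of_nonneg_left _ hR.le
        refine sqrt4.trans ?_
        rw [sqrt5]
        exact add_le_add (sqrt6.trans (mul_le_mul_of_nonneg_left sqrt7 hσ)) le_rfl
    _ = σ * R * Real.sqrt (∑ i, ‖x i - xbar‖ ^ 2)
        + α * R * Real.sqrt (∑ i, ‖v i‖ ^ 2) := by ring
end

section
/- Let n ≥ 1, let E be a real inner product space, let β ∈ [0,1) and L ≥ 0, and let A be an n×n doubly stochastic matrix that is σ-contractive on mean-zero families with σ ≥ 0 and σ · √n ≤ 1/4. Let g : ℕ → Fin n → E satisfy ‖g k i‖ ≤ L for all k, i; let m : ℕ → Fin n → E satisfy m 0 i = 0 and m (k+1) i = β • (m k i) + g k i; and let s : ℕ → Fin n → E satisfy s 0 i = g 0 i and s (k+1) i = (A·(s k)) i + m (k+1) i − m k i. Assume moreover the tracking consistency property that (1/n) ∑_i s k i = (1/n) ∑_i g k i for every k. Then ‖s k i‖ ≤ 4L/(1−β) for every k and every i. (The paper's uniform-boundedness lemma for the gradient-tracking variable, Lemma with conclusion ‖s_{i,k}‖ ≤ 4L_g/(1−β).) -/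
open Finset

lemma tvub_coord {E : Type*} [NormedAddCommGroup E] {n : ℕ} (v : Fin n → E) (i : Fin n) :
    ‖v i‖ ≤ Real.sqrt (∑ j, ‖v j‖ ^ 2) := by
  have h : ‖v i‖ ^ 2 ≤ ∑ j, ‖v j‖ ^ 2 :=
    Finset.single_le_sum (f := fun j => ‖v j‖ ^ 2) (fun j _ => sq_nonneg _) (Finset.mem_univ i)
  calc ‖v i‖ = Real.sqrt (‖v i‖ ^ 2) := (Real.sqrt_sq (norm_nonneg _)).symm
    _ ≤ _ := Real.sqrt_le_sqrt h

lemma tvub_minkowski {E : Type*} [NormedAddCommGroup E] [InnerProductSpace ℝ E] {n : ℕ}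
    (a b : Fin n → E) :
    Real.sqrt (∑ i, ‖a i + b i‖ ^ 2) ≤
      Real.sqrt (∑ i, ‖a i‖ ^ 2) + Real.sqrt (∑ i, ‖b i‖ ^ 2) := by
  have h := norm_add_le ((WithLp.equiv 2 (Fin n → E)).symm a) ((WithLp.equiv 2 (Fin n → E)).symm b)
  simp only [PiLp.norm_eq_of_L2] at h
  convert h using 3
  all_goals rfl

lemma tvub_unif {E : Type*} [NormedAddCommGroup E] {n : ℕ} (v : Fin n → E) {c : ℝ}
    (hc : 0 ≤ c) (h : ∀ i, ‖v i‖ ≤ c) :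
    Real.sqrt (∑ i, ‖v i‖ ^ 2) ≤ c * Real.sqrt (n : ℝ) := by
  have h1 : ∑ i, ‖v i‖ ^ 2 ≤ (n : ℝ) * c ^ 2 := by
    calc ∑ i, ‖v i‖ ^ 2 ≤ ∑ _i : Fin n, c ^ 2 :=
          Finset.sum_le_sum fun i _ => pow_le_pow_left₀ (norm_nonneg _) (h i) 2
      _ = (n : ℝ) * c ^ 2 := by simp [Finset.sum_const, mul_comm]
  calc Real.sqrt (∑ i, ‖v i‖ ^ 2) ≤ Real.sqrt ((n : ℝ) * c ^ 2) := Real.sqrt_le_sqrt h1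
    _ = c * Real.sqrt (n : ℝ) := by
        rw [Real.sqrt_mul (by positivity), Real.sqrt_sq hc, mul_comm]

lemma tvub_proj {E : Type*} [NormedAddCommGroup E] [InnerProductSpace ℝ E] {n : ℕ}
    (x : Fin n → E) (c : E) (hc : ∑ i, x i = (n : ℝ) • c) :
    ∑ i, ‖x i - c‖ ^ 2 ≤ ∑ i, ‖x i‖ ^ 2 := by
  have h1 : ∑ i, ‖x i - c‖ ^ 2
      = ∑ i, ‖x i‖ ^ 2 - 2 * inner ℝ (∑ i, x i) c + (n : ℝ) * ‖c‖ ^ 2 := by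
    rw [sum_inner, Finset.mul_sum]
    simp_rw [norm_sub_sq_real]
    rw [Finset.sum_add_distrib, Finset.sum_sub_distrib, Finset.sum_const, Finset.card_univ,
      Fintype.card_fin, nsmul_eq_mul]
  rw [h1, hc, real_inner_smul_left, real_inner_self_eq_norm_sq]
  nlinarith [sq_nonneg ‖c‖, Nat.cast_nonneg (α := ℝ) n]

/-- Uniform boundedness of the gradient-tracking variable: under the momentum
recursion `m (k+1) i = β • m k i + g k i` (with `m 0 i = 0`, `‖g k i‖ ≤ L`), the
tracking recursion `s (k+1) i = (A·s k) i + m (k+1) i - m k i` (with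
`s 0 i = g 0 i`), `σ √n ≤ 1/4`, and the tracking consistency property, one has
`‖s k i‖ ≤ 4L/(1-β)` for all `k` and `i`. -/
theorem tracking_variable_uniform_bound
    {E : Type*} [NormedAddCommGroup E] [InnerProductSpace ℝ E]
    (n : ℕ) (hn : 1 ≤ n)
    (β L : ℝ) (hβ0 : 0 ≤ β) (hβ1 : β < 1) (hL : 0 ≤ L)
    (A : Fin n → Fin n → ℝ)
    (hA0 : ∀ i j, 0 ≤ A i j)
    (hArow : ∀ i, ∑ j, A i j = 1)
    (hAcol : ∀ j, ∑ i, A i j = 1)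
    (σ : ℝ) (hσ : 0 ≤ σ) (hσn : σ * Real.sqrt (n : ℝ) ≤ 1 / 4)
    (hcontr : ∀ v : Fin n → E, (∑ i, v i) = 0 →
      Real.sqrt (∑ i, ‖∑ j, A i j • v j‖ ^ 2) ≤ σ * Real.sqrt (∑ i, ‖v i‖ ^ 2))
    (g m s : ℕ → Fin n → E)
    (hg : ∀ k i, ‖g k i‖ ≤ L)
    (hm0 : ∀ i, m 0 i = 0)
    (hmrec : ∀ k i, m (k + 1) i = β • m k i + g k i)
    (hs0 : ∀ i, s 0 i = g 0 i)
    (hsrec : ∀ k i, s (k + 1) i = (∑ j, A i j • s k j) + m (k + 1) i - m k i)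
    (hcons : ∀ k, (n : ℝ)⁻¹ • (∑ i, s k i) = (n : ℝ)⁻¹ • (∑ i, g k i)) :
    ∀ k i, ‖s k i‖ ≤ 4 * L / (1 - β) := by
  have hnR : (0 : ℝ) < n := by exact_mod_cast Nat.lt_of_lt_of_le Nat.zero_lt_one hn
  have h1β : (0 : ℝ) < 1 - β := by linarith
  have hsqn0 : 0 ≤ Real.sqrt (n : ℝ) := Real.sqrt_nonneg _
  have hsqn1 : 1 ≤ Real.sqrt (n : ℝ) := by
    rw [show (1 : ℝ) = Real.sqrt 1 by simp]
    exact Real.sqrt_le_sqrt (by exact_mod_cast hn)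
  have hσ4 : σ ≤ 1 / 4 := by nlinarith
  -- bound on momentum
  have hm : ∀ k i, ‖m k i‖ ≤ L / (1 - β) := by
    intro k
    induction k with
    | zero => intro i; rw [hm0]; simp; positivity
    | succ k ih =>
      intro i
      rw [hmrec]
      calc ‖β • m k i + g k i‖ ≤ β * ‖m k i‖ + ‖g k i‖ := by
            refine (norm_add_le _ _).trans ?_
            rw [norm_smul, Real.norm_of_nonneg hβ0]
        _ ≤ β * (L / (1 - β)) + L := by
            gcongr
            · exact ih i
            · exact hg k i
        _ = L / (1 - β) := by field_simp; ring
  -- bound on momentum increments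
  have hΔ : ∀ k i, ‖m (k + 1) i - m k i‖ ≤ 2 * L := by
    intro k i
    have he : m (k + 1) i - m k i = (β - 1) • m k i + g k i := by
      rw [hmrec, sub_smul, one_smul]; abel
    rw [he]
    calc ‖(β - 1) • m k i + g k i‖ ≤ ‖(β - 1) • m k i‖ + ‖g k i‖ := norm_add_le _ _
      _ = (1 - β) * ‖m k i‖ + ‖g k i‖ := by
          rw [norm_smul, Real.norm_eq_abs, abs_of_nonpos (by linarith), neg_sub]
      _ ≤ (1 - β) * (L / (1 - β)) + L := by
          gcongr
          · exact hm k i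
          · exact hg k i
      _ = 2 * L := by field_simp; ring
  -- the running mean
  set sb : ℕ → E := fun k => (n : ℝ)⁻¹ • ∑ i, s k i with hsb_def
  have hsbL : ∀ k, ‖sb k‖ ≤ L := by
    intro k
    rw [hsb_def]
    simp only
    rw [hcons k, norm_smul, Real.norm_eq_abs, abs_of_nonneg (by positivity)]
    calc (n : ℝ)⁻¹ * ‖∑ i, g k i‖ ≤ (n : ℝ)⁻¹ * ((n : ℝ) * L) := by
          gcongr
          calc ‖∑ i, g k i‖ ≤ ∑ i, ‖g k i‖ := norm_sum_le _ _
            _ ≤ ∑ _i : Fin n, L := Finset.sum_le_sum fun i _ => hg k i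
            _ = (n : ℝ) * L := by simp [Finset.sum_const, mul_comm]
      _ = L := by field_simp
  -- centered variables
  set d : ℕ → Fin n → E := fun k i => s k i - sb k with hd_def
  have hdsum : ∀ k, ∑ i, d k i = 0 := by
    intro k
    have h1 : ∑ i, d k i = (∑ i, s k i) - (n : ℝ) • sb k := by
      rw [hd_def]
      simp only
      rw [Finset.sum_sub_distrib, Finset.sum_const, Finset.card_univ, Fintype.card_fin,
        ← Nat.cast_smul_eq_nsmul ℝ]
    rw [h1, hsb_def]
    simp only
    rw [smul_inv_smul₀ (ne_of_gt hnR), sub_self]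
  -- the key recursion for s in centered form
  have hdrec : ∀ k i, s (k + 1) i
      = sb k + (∑ j, A i j • d k j) + (m (k + 1) i - m k i) := by
    intro k i
    rw [hsrec]
    have h1 : ∑ j, A i j • s k j = (∑ j, A i j • d k j) + sb k := by
      have h2 : ∀ j, A i j • s k j = A i j • d k j + A i j • sb k := by
        intro j
        rw [hd_def]
        simp only [smul_sub]
        abel
      rw [Finset.sum_congr rfl fun j _ => h2 j, Finset.sum_add_distrib, ← Finset.sum_smul,
        hArow, one_smul]
    rw [h1]
    abel
  -- the mean of the increments equals the drift of the mean
  have hΔmean : ∀ k, ∑ i, (m (k + 1) i - m k i) = (n : ℝ) • (sb (k + 1) - sb k) := by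
    intro k
    have hsum : ∑ i, s (k + 1) i = (∑ i, s k i) + ∑ i, (m (k + 1) i - m k i) := by
      calc ∑ i, s (k + 1) i
          = ∑ i, ((∑ j, A i j • s k j) + (m (k + 1) i - m k i)) := by
            refine Finset.sum_congr rfl fun i _ => ?_
            rw [hsrec]; abel
        _ = (∑ i, ∑ j, A i j • s k j) + ∑ i, (m (k + 1) i - m k i) :=
            Finset.sum_add_distrib
        _ = (∑ i, s k i) + ∑ i, (m (k + 1) i - m k i) := by
            congr 1
            rw [Finset.sum_comm]
            refine Finset.sum_congr rfl fun j _ => ?_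
            rw [← Finset.sum_smul, hAcol, one_smul]
    rw [hsb_def]
    simp only
    rw [smul_sub, smul_inv_smul₀ (ne_of_gt hnR), smul_inv_smul₀ (ne_of_gt hnR), hsum]
    abel
  -- uniform bound on the block ℓ² norm of the centered variable
  have hD : ∀ k, Real.sqrt (∑ i, ‖d k i‖ ^ 2) ≤ 8 / 3 * L * Real.sqrt (n : ℝ) := by
    intro k
    induction k with
    | zero =>
      have hb : ∀ i, ‖d 0 i‖ ≤ 2 * L := by
        intro i
        rw [hd_def]
        simp only
        calc ‖s 0 i - sb 0‖ ≤ ‖s 0 i‖ + ‖sb 0‖ := norm_sub_le _ _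
          _ ≤ L + L := by
              refine add_le_add ?_ (hsbL 0)
              rw [hs0]; exact hg 0 i
          _ = 2 * L := by ring
      calc Real.sqrt (∑ i, ‖d 0 i‖ ^ 2) ≤ 2 * L * Real.sqrt (n : ℝ) :=
            tvub_unif _ (by positivity) hb
        _ ≤ 8 / 3 * L * Real.sqrt (n : ℝ) := by nlinarith
    | succ k ih =>
      have heq : ∀ i, d (k + 1) i
          = (∑ j, A i j • d k j)
            + ((m (k + 1) i - m k i) - (sb (k + 1) - sb k)) := by
        intro i
        rw [hd_def]
        simp only
        rw [hdrec k i]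
        abel
      have h2 : Real.sqrt (∑ i, ‖(m (k + 1) i - m k i) - (sb (k + 1) - sb k)‖ ^ 2)
          ≤ 2 * L * Real.sqrt (n : ℝ) := by
        calc Real.sqrt (∑ i, ‖(m (k + 1) i - m k i) - (sb (k + 1) - sb k)‖ ^ 2)
            ≤ Real.sqrt (∑ i, ‖m (k + 1) i - m k i‖ ^ 2) :=
              Real.sqrt_le_sqrt (tvub_proj _ _ (hΔmean k))
          _ ≤ 2 * L * Real.sqrt (n : ℝ) := tvub_unif _ (by positivity) (hΔ k)
      have h1 : Real.sqrt (∑ i, ‖∑ j, A i j • d k j‖ ^ 2)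
          ≤ σ * (8 / 3 * L * Real.sqrt (n : ℝ)) :=
        (hcontr (d k) (hdsum k)).trans (by gcongr)
      calc Real.sqrt (∑ i, ‖d (k + 1) i‖ ^ 2)
          = Real.sqrt (∑ i, ‖(∑ j, A i j • d k j)
              + ((m (k + 1) i - m k i) - (sb (k + 1) - sb k))‖ ^ 2) := by
            congr 1
            exact Finset.sum_congr rfl fun i _ => by rw [heq i]
        _ ≤ Real.sqrt (∑ i, ‖∑ j, A i j • d k j‖ ^ 2)
              + Real.sqrt (∑ i, ‖(m (k + 1) i - m k i) - (sb (k + 1) - sb k)‖ ^ 2) :=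
            tvub_minkowski _ _
        _ ≤ σ * (8 / 3 * L * Real.sqrt (n : ℝ)) + 2 * L * Real.sqrt (n : ℝ) := by
            exact add_le_add h1 h2
        _ ≤ 8 / 3 * L * Real.sqrt (n : ℝ) := by nlinarith [mul_nonneg hL hsqn0]
  -- conclusion
  intro k i
  have h4L : 4 * L ≤ 4 * L / (1 - β) := by
    rw [le_div_iff₀ h1β]
    nlinarith
  cases k with
  | zero =>
    rw [hs0]
    calc ‖g 0 i‖ ≤ L := hg 0 i
      _ ≤ 4 * L := by linarith
      _ ≤ 4 * L / (1 - β) := h4L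
  | succ k =>
    rw [hdrec k i]
    have hA2 : ‖∑ j, A i j • d k j‖ ≤ 2 / 3 * L := by
      calc ‖∑ j, A i j • d k j‖
          ≤ Real.sqrt (∑ i, ‖∑ j, A i j • d k j‖ ^ 2) :=
            tvub_coord (fun i => ∑ j, A i j • d k j) i
        _ ≤ σ * Real.sqrt (∑ i, ‖d k i‖ ^ 2) := hcontr (d k) (hdsum k)
        _ ≤ σ * (8 / 3 * L * Real.sqrt (n : ℝ)) := by gcongr; exact hD k
        _ = (σ * Real.sqrt (n : ℝ)) * (8 / 3 * L) := by ring
        _ ≤ 1 / 4 * (8 / 3 * L) := by nlinarith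
        _ = 2 / 3 * L := by ring
    calc ‖sb k + (∑ j, A i j • d k j) + (m (k + 1) i - m k i)‖
        ≤ ‖sb k + ∑ j, A i j • d k j‖ + ‖m (k + 1) i - m k i‖ := norm_add_le _ _
      _ ≤ ‖sb k‖ + ‖∑ j, A i j • d k j‖ + ‖m (k + 1) i - m k i‖ := by
          gcongr; exact norm_add_le _ _
      _ ≤ L + 2 / 3 * L + 2 * L :=
          add_le_add (add_le_add (hsbL k) hA2) (hΔ k i)
      _ ≤ 4 * L := by linarith
      _ ≤ 4 * L / (1 - β) := h4L
end

section
/- Let n ≥ 1, let E be a real inner product space, and let A be an n×n doubly stochastic matrix that is σ-contractive on mean-zero families with σ ≥ 0. Let s, m, m⁺ : Fin n → E and define s⁺ i := (A·s) i + m⁺ i − m i. Write ŝ := (1/n) ∑_i s i and ŝ⁺ := (1/n) ∑_i s⁺ i. Then √(∑_i ‖s⁺ i − ŝ⁺‖²) ≤ σ · √(∑_i ‖s i − ŝ‖²) + √(∑_i ‖m⁺ i − m i‖²). (One-step contraction of the tracking error towards the network average, the key recursion in the paper's summed tracking-error bound.) -/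
/-- One-step contraction of the tracking error towards the network average:
with `s⁺ i = (A·s) i + m⁺ i - m i` and a doubly stochastic `A` that is
`σ`-contractive on mean-zero families,
`‖s⁺ - ŝ⁺‖₂ ≤ σ ‖s - ŝ‖₂ + ‖m⁺ - m‖₂`. -/
theorem tracking_error_one_step_contraction
    {E : Type*} [NormedAddCommGroup E] [InnerProductSpace ℝ E]
    (n : ℕ) (hn : 1 ≤ n)
    (A : Fin n → Fin n → ℝ)
    (hA0 : ∀ i j, 0 ≤ A i j)
    (hArow : ∀ i, ∑ j, A i j = 1)
    (hAcol : ∀ j, ∑ i, A i j = 1)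
    (σ : ℝ) (hσ : 0 ≤ σ)
    (hcontr : ∀ v : Fin n → E, (∑ i, v i) = 0 →
      Real.sqrt (∑ i, ‖∑ j, A i j • v j‖ ^ 2) ≤ σ * Real.sqrt (∑ i, ‖v i‖ ^ 2))
    (s m mplus splus : Fin n → E)
    (hsplus : ∀ i, splus i = (∑ j, A i j • s j) + mplus i - m i)
    (shat shatp : E)
    (hshat : shat = (n : ℝ)⁻¹ • ∑ i, s i)
    (hshatp : shatp = (n : ℝ)⁻¹ • ∑ i, splus i) :
    Real.sqrt (∑ i, ‖splus i - shatp‖ ^ 2) ≤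
      σ * Real.sqrt (∑ i, ‖s i - shat‖ ^ 2)
        + Real.sqrt (∑ i, ‖mplus i - m i‖ ^ 2) := by
  have hn0 : (n : ℝ) ≠ 0 := by positivity
  set v : Fin n → E := fun i => s i - shat with hv
  set d : Fin n → E := fun i => mplus i - m i with hd
  set dhat : E := (n : ℝ)⁻¹ • ∑ i, d i with hdh
  have hsum_s : ∑ i, s i = (n : ℝ) • shat := by
    rw [hshat, smul_smul, mul_inv_cancel₀ hn0, one_smul]
  have hsum_d : ∑ i, d i = (n : ℝ) • dhat := by
    rw [hdh, smul_smul, mul_inv_cancel₀ hn0, one_smul]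
  have hvsum : ∑ i, v i = 0 := by
    simp only [hv, Finset.sum_sub_distrib, hsum_s, Finset.sum_const,
      Finset.card_univ, Fintype.card_fin, ← Nat.cast_smul_eq_nsmul ℝ]
    simp
  -- column sums : ∑_i (A·s) i = ∑ s
  have hcol : ∑ i, (∑ j, A i j • s j) = ∑ j, s j := by
    rw [Finset.sum_comm]
    simp_rw [← Finset.sum_smul, hAcol, one_smul]
  have hshatp' : shatp = shat + dhat := by
    have : ∑ i, splus i = (n : ℝ) • shat + (n : ℝ) • dhat := by
      have : ∀ i, splus i = (∑ j, A i j • s j) + d i := by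
        intro i; rw [hsplus i, hd]; abel
      simp_rw [this, Finset.sum_add_distrib, hcol, hsum_s, hsum_d]
    rw [hshatp, this, smul_add, smul_smul, smul_smul, inv_mul_cancel₀ hn0, one_smul, one_smul]
  have hdecomp : ∀ i, splus i - shatp = (∑ j, A i j • v j) + (d i - dhat) := by
    intro i
    have hAv : ∑ j, A i j • v j = (∑ j, A i j • s j) - shat := by
      simp_rw [hv, smul_sub, Finset.sum_sub_distrib, ← Finset.sum_smul, hArow, one_smul]
    rw [hAv, hsplus i, hshatp', hd]; simp only [sub_eq_add_neg, neg_add]; abel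
  -- PiLp machinery
  have keyn : ∀ f : Fin n → E,
      ‖(WithLp.equiv 2 (Fin n → E)).symm f‖ = Real.sqrt (∑ i, ‖f i‖ ^ 2) := by
    intro f
    rw [PiLp.norm_eq_of_L2]
    rfl
  set X := (WithLp.equiv 2 (Fin n → E)).symm (fun i => ∑ j, A i j • v j) with hX
  set Y := (WithLp.equiv 2 (Fin n → E)).symm (fun i => d i - dhat) with hY
  have h1 : Real.sqrt (∑ i, ‖splus i - shatp‖ ^ 2) = ‖X + Y‖ := by
    have : X + Y = (WithLp.equiv 2 (Fin n → E)).symm (fun i => splus i - shatp) := by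
      ext i
      show (∑ j, A i j • v j) + (d i - dhat) = splus i - shatp
      exact (hdecomp i).symm
    rw [this, keyn]
  have h2 : ‖X‖ ≤ σ * Real.sqrt (∑ i, ‖s i - shat‖ ^ 2) := by
    rw [hX, keyn]
    exact hcontr v hvsum
  have hvar : ∑ i, ‖d i - dhat‖ ^ 2 ≤ ∑ i, ‖d i‖ ^ 2 := by
    have hexp : ∀ i, ‖d i - dhat‖ ^ 2
        = ‖d i‖ ^ 2 - 2 * inner ℝ (d i) dhat + ‖dhat‖ ^ 2 :=
      fun i => norm_sub_sq_real (d i) dhat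
    have hin : ∑ i, (inner ℝ (d i) dhat : ℝ) = (n : ℝ) * ‖dhat‖ ^ 2 := by
      rw [← sum_inner, hsum_d, real_inner_smul_left, real_inner_self_eq_norm_sq]
    have hnn : 0 ≤ (n : ℝ) * ‖dhat‖ ^ 2 := by positivity
    simp_rw [hexp]
    rw [Finset.sum_add_distrib, Finset.sum_sub_distrib, ← Finset.mul_sum, hin,
      Finset.sum_const, Finset.card_univ, Fintype.card_fin, nsmul_eq_mul]
    nlinarith
  have h3 : ‖Y‖ ≤ Real.sqrt (∑ i, ‖mplus i - m i‖ ^ 2) := by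
    rw [hY, keyn]
    exact Real.sqrt_le_sqrt hvar
  calc Real.sqrt (∑ i, ‖splus i - shatp‖ ^ 2) = ‖X + Y‖ := h1
    _ ≤ ‖X‖ + ‖Y‖ := norm_add_le X Y
    _ ≤ _ := add_le_add h2 h3
end

section
/- Let n ≥ 1, let E be a real inner product space, let M ⊆ E be nonempty, and let P : E → E be a nearest-point projection onto M. Let A be an n×n doubly stochastic matrix, let α ≥ 0, let x, v : Fin n → E with x i ∈ M for every i, and set x⁺ i := P((A·x) i − α • (v i)). Then for every c ∈ E, √(∑_i ‖x⁺ i − x i‖²) ≤ 4 · √(∑_i ‖x i − c‖²) + 2α · √(∑_i ‖v i‖²). (The iterate-displacement bound ‖x_{k+1} − x_k‖ ≤ 4‖x_k − x̄_k‖ + 2α‖v_k‖ used in the paper's summed gradient-average bound.) -/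
open Finset

/-- Jensen-type inequality: square of convex combination of nonnegative reals. -/
lemma sq_convex_comb_le {n : ℕ} (a b : Fin n → ℝ) (ha : ∀ j, 0 ≤ a j)
    (hb : ∀ j, 0 ≤ b j) (hsum : ∑ j, a j = 1) :
    (∑ j, a j * b j) ^ 2 ≤ ∑ j, a j * b j ^ 2 := by
  have := Finset.sum_mul_sq_le_sq_mul_sq Finset.univ (fun j => Real.sqrt (a j))
    (fun j => Real.sqrt (a j) * b j)
  have h1 : ∀ j : Fin n, Real.sqrt (a j) * (Real.sqrt (a j) * b j) = a j * b j := by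
    intro j
    rw [← mul_assoc, Real.mul_self_sqrt (ha j)]
  have h2 : ∀ j : Fin n, Real.sqrt (a j) ^ 2 = a j := fun j => Real.sq_sqrt (ha j)
  have h3 : ∀ j : Fin n, (Real.sqrt (a j) * b j) ^ 2 = a j * b j ^ 2 := by
    intro j; rw [mul_pow, h2]
  simp only [h1, h2, h3, hsum, one_mul] at this
  exact this

/-- Doubly stochastic averaging is nonexpansive in block ℓ². -/
lemma ds_nonexpansive {E : Type*} [NormedAddCommGroup E] [InnerProductSpace ℝ E]
    {n : ℕ} (A : Fin n → Fin n → ℝ) (hA0 : ∀ i j, 0 ≤ A i j)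
    (hArow : ∀ i, ∑ j, A i j = 1) (hAcol : ∀ j, ∑ i, A i j = 1)
    (y : Fin n → E) :
    ∑ i, ‖∑ j, A i j • y j‖ ^ 2 ≤ ∑ i, ‖y i‖ ^ 2 := by
  have step1 : ∀ i, ‖∑ j, A i j • y j‖ ^ 2 ≤ ∑ j, A i j * ‖y j‖ ^ 2 := by
    intro i
    have htri : ‖∑ j, A i j • y j‖ ≤ ∑ j, A i j * ‖y j‖ := by
      refine (norm_sum_le _ _).trans (le_of_eq ?_)
      refine Finset.sum_congr rfl fun j _ => ?_
      rw [norm_smul, Real.norm_eq_abs, abs_of_nonneg (hA0 i j)]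
    have h2 := sq_convex_comb_le (A i) (fun j => ‖y j‖) (hA0 i)
      (fun j => norm_nonneg _) (hArow i)
    calc ‖∑ j, A i j • y j‖ ^ 2 ≤ (∑ j, A i j * ‖y j‖) ^ 2 := by
          apply pow_le_pow_left₀ (norm_nonneg _) htri
      _ ≤ ∑ j, A i j * ‖y j‖ ^ 2 := h2
  calc ∑ i, ‖∑ j, A i j • y j‖ ^ 2 ≤ ∑ i, ∑ j, A i j * ‖y j‖ ^ 2 :=
        Finset.sum_le_sum fun i _ => step1 i
    _ = ∑ j, (∑ i, A i j) * ‖y j‖ ^ 2 := by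
        rw [Finset.sum_comm]
        exact Finset.sum_congr rfl fun j _ => (Finset.sum_mul ..).symm
    _ = ∑ i, ‖y i‖ ^ 2 := by simp [hAcol]

/-- Iterate-displacement bound: for `x⁺ i = P((A·x) i - α • v i)` with the `x i`
lying on `M`, a nearest-point projection `P` onto `M`, and doubly stochastic `A`,
one has `‖x⁺ - x‖₂ ≤ 4‖x - c‖₂ + 2α‖v‖₂` for every reference point `c`. -/
theorem iterate_displacement_bound
    {E : Type*} [NormedAddCommGroup E] [InnerProductSpace ℝ E]
    (n : ℕ) (hn : 1 ≤ n)
    (M : Set E) (hM : M.Nonempty)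
    (P : E → E) (hPin : ∀ z, P z ∈ M)
    (hPnear : ∀ z : E, ∀ y ∈ M, ‖z - P z‖ ≤ ‖z - y‖)
    (A : Fin n → Fin n → ℝ)
    (hA0 : ∀ i j, 0 ≤ A i j)
    (hArow : ∀ i, ∑ j, A i j = 1)
    (hAcol : ∀ j, ∑ i, A i j = 1)
    (α : ℝ) (hα : 0 ≤ α)
    (x v xplus : Fin n → E)
    (hxM : ∀ i, x i ∈ M)
    (hxplus : ∀ i, xplus i = P ((∑ j, A i j • x j) - α • v i)) :
    ∀ c : E, Real.sqrt (∑ i, ‖xplus i - x i‖ ^ 2) ≤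
      4 * Real.sqrt (∑ i, ‖x i - c‖ ^ 2) + 2 * α * Real.sqrt (∑ i, ‖v i‖ ^ 2) := by
  intro c
  classical
  set y : Fin n → E := fun i => x i - c with hy
  set z : Fin n → E := fun i => (∑ j, A i j • x j) - α • v i with hz
  -- the PiLp space
  let F := PiLp 2 (fun _ : Fin n => E)
  let toF : (Fin n → E) → F := (WithLp.equiv 2 (Fin n → E)).symm
  have hnorm : ∀ w : Fin n → E, ‖toF w‖ = Real.sqrt (∑ i, ‖w i‖ ^ 2) := by
    intro w
    rw [PiLp.norm_eq_of_L2]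
    rfl
  -- elements
  let d : F := toF (fun i => xplus i - x i)
  let u : F := toF (fun i => P (z i) - z i)
  let w : F := toF (fun i => z i - x i)
  let g : F := toF (fun i => (∑ j, A i j • y j) - y i)
  let vv : F := toF v
  have hdu : d = u + w := by
    ext i
    show xplus i - x i = (P (z i) - z i) + (z i - x i)
    rw [hxplus i]
    abel
  have huw : ‖u‖ ≤ ‖w‖ := by
    rw [hnorm, hnorm]
    apply Real.sqrt_le_sqrt
    apply Finset.sum_le_sum
    intro i _
    have : ‖P (z i) - z i‖ ≤ ‖z i - x i‖ := by
      rw [norm_sub_rev]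
      exact hPnear (z i) (x i) (hxM i)
    exact pow_le_pow_left₀ (norm_nonneg _) this 2
  have hwg : w = g - α • vv := by
    ext i
    show z i - x i = ((∑ j, A i j • y j) - y i) - α • v i
    have hc : (∑ j, A i j • (x j - c)) = (∑ j, A i j • x j) - c := by
      simp only [smul_sub]
      rw [Finset.sum_sub_distrib, ← Finset.sum_smul, hArow i, one_smul]
    simp only [hz, hy, hc]
    abel
  have hg4 : ‖g‖ ≤ 2 * ‖toF y‖ := by
    have : g = toF (fun i => ∑ j, A i j • y j) - toF y := by
      ext i; rfl
    rw [this]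
    refine (norm_sub_le _ _).trans ?_
    have hA : ‖toF (fun i => ∑ j, A i j • y j)‖ ≤ ‖toF y‖ := by
      rw [hnorm, hnorm]
      exact Real.sqrt_le_sqrt (ds_nonexpansive A hA0 hArow hAcol y)
    linarith
  have hfinal : ‖d‖ ≤ 4 * ‖toF y‖ + 2 * α * ‖vv‖ := by
    have h1 : ‖d‖ ≤ ‖u‖ + ‖w‖ := hdu ▸ norm_add_le u w
    have h2 : ‖w‖ ≤ ‖g‖ + α * ‖vv‖ := by
      rw [hwg]
      refine (norm_sub_le _ _).trans ?_
      rw [norm_smul, Real.norm_eq_abs, abs_of_nonneg hα]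
    linarith
  have e1 : ‖d‖ = Real.sqrt (∑ i, ‖xplus i - x i‖ ^ 2) := hnorm _
  have e2 : ‖toF y‖ = Real.sqrt (∑ i, ‖x i - c‖ ^ 2) := hnorm _
  have e3 : ‖vv‖ = Real.sqrt (∑ i, ‖v i‖ ^ 2) := hnorm _
  rw [← e1, ← e2, ← e3]
  exact hfinal
end

section
/- Let n ≥ 1, let E be a real inner product space, and let A be an n×n real matrix with every row summing to 1 which is σ-contractive on mean-zero families, with σ ≥ 0. Then for every family v : Fin n → E and every index i, ‖∑_j ((A i j) − 1/n) • v j‖ ≤ σ · √n · max_j ‖v j‖. (The row-wise deviation-from-average bound used in the paper's induction establishing the uniform bound on the tracking variable.) -/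
/-- Row-wise deviation-from-average bound: for a matrix `A` with row sums `1`
that is `σ`-contractive on mean-zero families,
`‖∑_j ((A i j) - 1/n) • v j‖ ≤ σ √n max_j ‖v j‖` for every family `v` and
every row `i`. -/
theorem rowwise_deviation_bound
    {E : Type*} [NormedAddCommGroup E] [InnerProductSpace ℝ E]
    (n : ℕ) (hn : 1 ≤ n)
    (A : Fin n → Fin n → ℝ)
    (hArow : ∀ i, ∑ j, A i j = 1)
    (σ : ℝ) (hσ : 0 ≤ σ)
    (hcontr : ∀ v : Fin n → E, (∑ i, v i) = 0 →
      Real.sqrt (∑ i, ‖∑ j, A i j • v j‖ ^ 2) ≤ σ * Real.sqrt (∑ i, ‖v i‖ ^ 2))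
    (v : Fin n → E) (i : Fin n) :
    ‖∑ j, (A i j - (n : ℝ)⁻¹) • v j‖ ≤
      σ * Real.sqrt (n : ℝ) *
        Finset.univ.sup' (Finset.univ_nonempty_iff.mpr ⟨⟨0, hn⟩⟩) (fun j => ‖v j‖) := by
  have hnpos : (0:ℝ) < n := by exact_mod_cast hn
  set s : E := ∑ k, v k with hs
  set m : E := (n:ℝ)⁻¹ • s with hm
  set w : Fin n → E := fun j => v j - m with hw
  have hsum0 : (∑ j, w j) = 0 := by
    simp only [hw, Finset.sum_sub_distrib, Finset.sum_const, Finset.card_univ,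
      Fintype.card_fin]
    rw [hm, ← hs, ← Nat.cast_smul_eq_nsmul ℝ, smul_smul,
      mul_inv_cancel₀ (ne_of_gt hnpos), one_smul, sub_self]
  -- the target vector equals ∑ A i j • w j
  have hkey : (∑ j, (A i j - (n : ℝ)⁻¹) • v j) = ∑ j, A i j • w j := by
    simp only [hw, smul_sub, sub_smul, Finset.sum_sub_distrib]
    congr 1
    rw [← Finset.smul_sum, ← Finset.sum_smul, hArow i, one_smul]
  set M : ℝ := Finset.univ.sup' (Finset.univ_nonempty_iff.mpr ⟨⟨0, hn⟩⟩) (fun j => ‖v j‖)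
    with hM
  have hMle : ∀ j, ‖v j‖ ≤ M := fun j =>
    Finset.le_sup' (fun j => ‖v j‖) (Finset.mem_univ j)
  have hM0 : 0 ≤ M := le_trans (norm_nonneg _) (hMle ⟨0, hn⟩)
  -- ∑ ‖w j‖² ≤ ∑ ‖v j‖²
  have hwv : (∑ j, ‖w j‖ ^ 2) ≤ ∑ j, ‖v j‖ ^ 2 := by
    have expand : ∀ j, ‖w j‖ ^ 2 = ‖v j‖ ^ 2 - 2 * inner ℝ (v j) m + ‖m‖ ^ 2 := by
      intro j
      simpa [hw] using @norm_sub_sq_real E _ _ (v j) m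
    have hinner : (∑ j, (inner ℝ (v j) m : ℝ)) = (n:ℝ) * ‖m‖ ^ 2 := by
      rw [← sum_inner]
      rw [← hs]
      have : s = (n:ℝ) • m := by
        rw [hm, smul_smul, mul_inv_cancel₀ (ne_of_gt hnpos), one_smul]
      rw [this, real_inner_smul_left, real_inner_self_eq_norm_sq]
    calc (∑ j, ‖w j‖ ^ 2)
        = ∑ j, (‖v j‖ ^ 2 - 2 * inner ℝ (v j) m + ‖m‖ ^ 2) := by
          exact Finset.sum_congr rfl fun j _ => expand j
      _ = (∑ j, ‖v j‖ ^ 2) - 2 * ((n:ℝ) * ‖m‖ ^ 2) + (n:ℝ) * ‖m‖ ^ 2 := by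
          rw [Finset.sum_add_distrib, Finset.sum_sub_distrib, ← Finset.mul_sum, hinner]
          simp [Finset.card_univ]
      _ = (∑ j, ‖v j‖ ^ 2) - (n:ℝ) * ‖m‖ ^ 2 := by ring
      _ ≤ ∑ j, ‖v j‖ ^ 2 := by
          have : 0 ≤ (n:ℝ) * ‖m‖ ^ 2 := by positivity
          linarith
  have hvM : (∑ j, ‖v j‖ ^ 2) ≤ (n:ℝ) * M ^ 2 := by
    calc (∑ j, ‖v j‖ ^ 2) ≤ ∑ _j : Fin n, M ^ 2 :=
          Finset.sum_le_sum fun j _ => by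
            have := hMle j
            nlinarith [norm_nonneg (v j)]
      _ = (n:ℝ) * M ^ 2 := by simp [Finset.card_univ, mul_comm]
  have h1 : ‖∑ j, A i j • w j‖ ≤ Real.sqrt (∑ i', ‖∑ j, A i' j • w j‖ ^ 2) := by
    rw [show ‖∑ j, A i j • w j‖ = Real.sqrt (‖∑ j, A i j • w j‖ ^ 2) by
      rw [Real.sqrt_sq (norm_nonneg _)]]
    apply Real.sqrt_le_sqrt
    exact Finset.single_le_sum (f := fun i' => ‖∑ j, A i' j • w j‖ ^ 2)
      (fun j _ => by positivity) (Finset.mem_univ i)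
  have h2 := hcontr w hsum0
  have h3 : σ * Real.sqrt (∑ j, ‖w j‖ ^ 2) ≤ σ * Real.sqrt ((n:ℝ) * M ^ 2) := by
    apply mul_le_mul_of_nonneg_left _ hσ
    exact Real.sqrt_le_sqrt (le_trans hwv hvM)
  have h4 : Real.sqrt ((n:ℝ) * M ^ 2) = Real.sqrt (n:ℝ) * M := by
    rw [Real.sqrt_mul (le_of_lt hnpos), Real.sqrt_sq hM0]
  rw [hkey]
  calc ‖∑ j, A i j • w j‖ ≤ Real.sqrt (∑ i', ‖∑ j, A i' j • w j‖ ^ 2) := h1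
    _ ≤ σ * Real.sqrt (∑ j, ‖w j‖ ^ 2) := h2
    _ ≤ σ * Real.sqrt ((n:ℝ) * M ^ 2) := h3
    _ = σ * Real.sqrt (n:ℝ) * M := by rw [h4, mul_assoc]
end
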